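/- A vector y ∈ [1, m]^m lies in the permutahedron, i.e., the convex hull of the vectors (π(1), ..., π(m)) over all permutations π of [m], if and only if the sum of all coordinates of y equals binomial(m+1, 2) and for every nonempty subset S of [m], the sum of the coordinates of y indexed by S is at most binomial(m+1, 2) − binomial(m+1−|S|, 2). -/

import Mathlib

lemma sum_first (t : ℕ) : ∑ k ∈ Finset.range t, (k+1) = (t+1).choose 2 := by
  induction t with
  | zero => simp
  | succ n ih =>
    rw [Finset.sum_range_succ, ih]
    have : (n+1+1).choose 2 = (n+1).choose 1 + (n+1).choose 2 := Nat.choose_succ_succ _ _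
    rw [this, Nat.choose_one_right]
    omega

lemma strictmono_ge {m k : ℕ} (f : Fin k → Fin m) (hf : StrictMono f) :
    ∀ n (hn : n < k), n ≤ (f ⟨n, hn⟩ : ℕ) := by
  intro n
  induction n with
  | zero => omega
  | succ n ih =>
    intro hn
    have h1 : n < k := by omega
    have h2 := ih h1
    have h3 : (f ⟨n, h1⟩ : ℕ) < (f ⟨n+1, hn⟩ : ℕ) := hf (by simp [Fin.lt_def])
    omega

lemma sum_ge_first {m : ℕ} (T : Finset (Fin m)) :
    (T.card + 1).choose 2 ≤ ∑ j ∈ T, ((j:ℕ)+1) := by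
  classical
  rw [← sum_first]
  set e := T.orderIsoOfFin rfl with he
  have : ∑ j ∈ T, ((j:ℕ)+1) = ∑ i : Fin T.card, ((e i : Fin m) : ℕ) + T.card := by
    rw [← Finset.sum_coe_sort T (fun j => (j:ℕ)+1)]
    rw [← Equiv.sum_comp e.toEquiv (fun x : T => ((x : Fin m) : ℕ) + 1)]
    rw [Finset.sum_add_distrib]
    simp
  rw [this]
  have h2 : ∑ k ∈ Finset.range T.card, (k+1) = (∑ k ∈ Finset.range T.card, k) + T.card := by
    rw [Finset.sum_add_distrib]; simp
  rw [h2]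
  have h3 : ∑ k ∈ Finset.range T.card, k ≤ ∑ i : Fin T.card, ((e i : Fin m) : ℕ) := by
    rw [Finset.sum_range fun k => k]
    apply Finset.sum_le_sum
    intro i _
    exact strictmono_ge (fun i => (e i : Fin m)) (fun a b hab => by
      have := e.strictMono hab; exact this) i (i.isLt)
  omega

lemma fin_sum_vals (m : ℕ) : ∑ j : Fin m, ((j:ℕ)+1) = (m+1).choose 2 := by
  rw [Fin.sum_univ_eq_sum_range (fun k => k+1) m, sum_first]

lemma subset_sum_le {m : ℕ} (T : Finset (Fin m)) :
    ∑ j ∈ T, ((j:ℕ)+1) + (m + 1 - T.card).choose 2 ≤ (m+1).choose 2 := by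
  classical
  have hsplit : ∑ j ∈ T, ((j:ℕ)+1) + ∑ j ∈ Tᶜ, ((j:ℕ)+1) = (m+1).choose 2 := by
    rw [Finset.sum_add_sum_compl]
    exact fin_sum_vals m
  have hc := sum_ge_first Tᶜ
  have hcard : Tᶜ.card = m - T.card := by
    rw [Finset.card_compl, Fintype.card_fin]
  have hTm : T.card ≤ m := by
    simpa using T.card_le_univ
  have : m + 1 - T.card = Tᶜ.card + 1 := by omega
  rw [this]
  omega

lemma abel_le (m : ℕ) (a c : ℕ → ℝ) (ha : ∀ i, i + 1 < m → a i ≤ a (i+1))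
    (hc : ∀ t, t ≤ m → 0 ≤ ∑ k ∈ Finset.range t, c k)
    (htot : ∑ k ∈ Finset.range m, c k = 0) :
    ∑ k ∈ Finset.range m, a k * c k ≤ 0 := by
  have h := Finset.sum_range_by_parts a c m
  simp only [smul_eq_mul] at h
  rw [h, htot, mul_zero, zero_sub, neg_nonpos]
  apply Finset.sum_nonneg
  intro i hi
  simp only [Finset.mem_range] at hi
  have h1 : 0 ≤ a (i+1) - a i := by
    have := ha i (by omega); linarith
  have h2 : 0 ≤ ∑ j ∈ Finset.range (i+1), c j := hc (i+1) (by omega)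
  positivity


/-- Rado's theorem: a vector `y ∈ [1, m]^m` lies in the permutahedron (the convex
hull of the permutation vectors `i ↦ π(i)`, here `i ↦ (π i : ℝ) + 1`) if and only
if `∑ y_i = C(m+1,2)` and `∑_{i ∈ S} y_i ≤ C(m+1,2) − C(m+1−|S|,2)` for every
nonempty `S ⊆ [m]`. -/
theorem permutahedron_description (m : ℕ) (hm : 0 < m) (y : Fin m → ℝ)
    (hy : ∀ i, 1 ≤ y i ∧ y i ≤ m) :
    y ∈ convexHull ℝ
        {v : Fin m → ℝ | ∃ π : Equiv.Perm (Fin m), v = fun i => (π i : ℝ) + 1} ↔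
      (∑ i, y i = (Nat.choose (m + 1) 2 : ℝ)) ∧
        ∀ S : Finset (Fin m), S.Nonempty →
          ∑ i ∈ S, y i ≤
            (Nat.choose (m + 1) 2 : ℝ) - (Nat.choose (m + 1 - S.card) 2 : ℝ) := by
  classical
  set s : Set (Fin m → ℝ) :=
    {v : Fin m → ℝ | ∃ π : Equiv.Perm (Fin m), v = fun i => (π i : ℝ) + 1} with hs
  -- permutation vectors satisfy the constraints
  have hpermsum : ∀ π : Equiv.Perm (Fin m),
      ∑ i, ((π i : ℝ) + 1) = ((m+1).choose 2 : ℝ) := by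
    intro π
    rw [Equiv.sum_comp π (fun i : Fin m => ((i : ℝ) + 1)), ← sum_first m]
    push_cast
    rw [← Fin.sum_univ_eq_sum_range (fun k => (k : ℝ) + 1) m]
  have hpermsubset : ∀ (π : Equiv.Perm (Fin m)) (S : Finset (Fin m)),
      ∑ i ∈ S, ((π i : ℝ) + 1) ≤
        ((m+1).choose 2 : ℝ) - ((m + 1 - S.card).choose 2 : ℝ) := by
    intro π S
    have himg : ∑ i ∈ S, ((π i : ℝ) + 1) = ∑ j ∈ S.image π, ((j : ℝ) + 1) := by
      rw [Finset.sum_image (fun a _ b _ hab => π.injective hab)]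
    have hcard : (S.image π).card = S.card :=
      Finset.card_image_of_injective S π.injective
    have h := subset_sum_le (S.image π)
    rw [hcard] at h
    have : (∑ j ∈ S.image π, (((j:ℕ)+1) : ℕ) : ℝ) = ∑ j ∈ S.image π, ((j : ℝ) + 1) := by
      push_cast; rfl
    rw [himg, ← this]
    have hcast : ((∑ j ∈ S.image π, ((j:ℕ)+1)) : ℝ) + ((m + 1 - S.card).choose 2 : ℝ)
        ≤ ((m+1).choose 2 : ℝ) := by exact_mod_cast (Nat.cast_le (α := ℝ)).2 h
    linarith
  constructor
  · -- forward
    intro hmem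
    have hsub : s ⊆ {x : Fin m → ℝ | (∑ i, x i = ((m+1).choose 2 : ℝ)) ∧
        ∀ S : Finset (Fin m), S.Nonempty →
          ∑ i ∈ S, x i ≤ ((m+1).choose 2 : ℝ) - ((m + 1 - S.card).choose 2 : ℝ)} := by
      rintro v ⟨π, rfl⟩
      exact ⟨hpermsum π, fun S _ => hpermsubset π S⟩
    have hconv : Convex ℝ {x : Fin m → ℝ | (∑ i, x i = ((m+1).choose 2 : ℝ)) ∧
        ∀ S : Finset (Fin m), S.Nonempty →
          ∑ i ∈ S, x i ≤ ((m+1).choose 2 : ℝ) - ((m + 1 - S.card).choose 2 : ℝ)} := by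
      rintro x ⟨hx1, hx2⟩ z ⟨hz1, hz2⟩ a b ha hb hab
      constructor
      · simp only [Pi.add_apply, Pi.smul_apply, smul_eq_mul, Finset.sum_add_distrib,
          ← Finset.mul_sum, hx1, hz1]
        nlinarith
      · intro S hS
        have h1 := hx2 S hS
        have h2 := hz2 S hS
        simp only [Pi.add_apply, Pi.smul_apply, smul_eq_mul, Finset.sum_add_distrib,
          ← Finset.mul_sum]
        nlinarith
    exact convexHull_min hsub hconv hmem
  · -- backward (Rado)
    rintro ⟨h1, h2⟩
    by_contra hK
    have hfin : s.Finite := by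
      have : s = Set.range (fun π : Equiv.Perm (Fin m) => fun i => ((π i : ℝ) + 1)) := by
        ext v; simp [hs, eq_comm, Set.range]
      rw [this]; exact Set.finite_range _
    have hclosed : IsClosed (convexHull ℝ s) := hfin.isClosed_convexHull (𝕜 := ℝ)
    obtain ⟨f, u, hfu, hyu⟩ :=
      geometric_hahn_banach_closed_point (convex_convexHull ℝ s) hclosed hK
    set ℓ : Fin m → ℝ := fun i => f (fun j => if i = j then 1 else 0) with hℓ
    have hfx : ∀ x : Fin m → ℝ, f x = ∑ i, x i * ℓ i := by
      intro x
      conv_lhs => rw [pi_eq_sum_univ x]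
      rw [map_sum]
      simp [hℓ, smul_eq_mul]
    set σ : Equiv.Perm (Fin m) := Tuple.sort ℓ with hσ
    have hmono : Monotone (ℓ ∘ σ) := Tuple.monotone_sort ℓ
    set idx : ℕ → Fin m := fun n => ⟨n % m, Nat.mod_lt n hm⟩ with hidx
    have hidxval : ∀ n, n < m → ((idx n : ℕ) = n) := fun n hn => Nat.mod_eq_of_lt hn
    have hidxfin : ∀ i : Fin m, idx (i : ℕ) = i := by
      intro i; ext; exact hidxval _ i.isLt
    set a : ℕ → ℝ := fun n => ℓ (σ (idx n)) with ha
    set c : ℕ → ℝ := fun n => y (σ (idx n)) - (((idx n : ℕ) : ℝ) + 1) with hc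
    -- total sum of c is 0
    have hccongr : ∀ t, t ≤ m → ∑ k ∈ Finset.range t, c k
        = ∑ k ∈ Finset.range t, y (σ (idx k)) - ∑ k ∈ Finset.range t, ((k : ℝ) + 1) := by
      intro t ht
      rw [← Finset.sum_sub_distrib]
      apply Finset.sum_congr rfl
      intro k hk
      have hkm : k % m = k := Nat.mod_eq_of_lt (lt_of_lt_of_le (Finset.mem_range.1 hk) ht)
      simp only [hc, hidx, hkm]
    have hrangecast : ∀ t : ℕ, ∑ k ∈ Finset.range t, ((k : ℝ) + 1) = ((t+1).choose 2 : ℝ) := by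
      intro t
      rw [← sum_first t]; push_cast; rfl
    have hytot : ∑ k ∈ Finset.range m, y (σ (idx k)) = ((m+1).choose 2 : ℝ) := by
      rw [← Fin.sum_univ_eq_sum_range (fun k => y (σ (idx k))) m]
      have : ∀ i : Fin m, y (σ (idx (i : ℕ))) = y (σ i) := fun i => by rw [hidxfin]
      rw [Finset.sum_congr rfl (fun i _ => this i), Equiv.sum_comp σ y, h1]
    have htot : ∑ k ∈ Finset.range m, c k = 0 := by
      rw [hccongr m le_rfl, hytot, hrangecast]; ring
    -- prefix sums of c are nonneg
    have hpre : ∀ t, t ≤ m → 0 ≤ ∑ k ∈ Finset.range t, c k := by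
      intro t ht
      rw [hccongr t ht, hrangecast]
      rw [sub_nonneg]
      rcases eq_or_lt_of_le ht with rfl | htlt
      · rw [hytot]
      · -- use the subset constraint on the image of [t, m)
        set S : Finset (Fin m) := (Finset.Ico t m).image (fun k => σ (idx k)) with hS
        have hinj : Set.InjOn (fun k => σ (idx k)) (Finset.Ico t m) := by
          intro a1 ha1 a2 ha2 he
          simp only [Finset.coe_Ico, Set.mem_Ico] at ha1 ha2
          have := σ.injective he
          have h1' : (idx a1 : ℕ) = a1 := hidxval _ ha1.2
          have h2' : (idx a2 : ℕ) = a2 := hidxval _ ha2.2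
          rw [← h1', ← h2', this]
        have hScard : S.card = m - t := by
          rw [hS, Finset.card_image_of_injOn hinj, Nat.card_Ico]
        have hSne : S.Nonempty := by
          apply Finset.Nonempty.image
          rw [Finset.nonempty_Ico]; exact htlt
        have hconstraint := h2 S hSne
        rw [hScard] at hconstraint
        have hidx : m + 1 - (m - t) = t + 1 := by omega
        rw [hidx] at hconstraint
        have hSsum : ∑ i ∈ S, y i = ∑ k ∈ Finset.Ico t m, y (σ (idx k)) := by
          rw [hS, Finset.sum_image (fun a1 h1' a2 h2' he => hinj h1' h2' he)]
        have hsplit : ∑ k ∈ Finset.range t, y (σ (idx k)) + ∑ k ∈ Finset.Ico t m, y (σ (idx k))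
            = ∑ k ∈ Finset.range m, y (σ (idx k)) := by
          simp only [Finset.range_eq_Ico]
          exact Finset.sum_Ico_consecutive _ (Nat.zero_le t) (le_of_lt htlt)
        rw [hytot] at hsplit
        rw [hSsum] at hconstraint
        linarith
    -- monotonicity of a
    have hamono : ∀ i, i + 1 < m → a i ≤ a (i+1) := by
      intro i hi
      apply hmono
      rw [Fin.le_def]
      simp only [hidx]
      rw [Nat.mod_eq_of_lt (by omega), Nat.mod_eq_of_lt hi]
      omega
    have habel := abel_le m a c hamono hpre htot
    -- translate: ∑ a*c ≤ 0 means f y ≤ f v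
    have hkey : ∑ k ∈ Finset.range m, ℓ (σ (idx k)) * y (σ (idx k))
        ≤ ∑ k ∈ Finset.range m, ℓ (σ (idx k)) * (((idx k : ℕ) : ℝ) + 1) := by
      have : ∑ k ∈ Finset.range m, (ℓ (σ (idx k)) * y (σ (idx k))
          - ℓ (σ (idx k)) * (((idx k : ℕ) : ℝ) + 1)) ≤ 0 := by
        calc ∑ k ∈ Finset.range m, (ℓ (σ (idx k)) * y (σ (idx k))
              - ℓ (σ (idx k)) * (((idx k : ℕ) : ℝ) + 1))
            = ∑ k ∈ Finset.range m, a k * c k := by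
              apply Finset.sum_congr rfl; intro k _; rw [ha, hc]; ring
          _ ≤ 0 := habel
      rw [Finset.sum_sub_distrib] at this
      linarith
    -- the permutation vector v
    set v : Fin m → ℝ := fun i => ((σ.symm i : ℕ) : ℝ) + 1 with hv
    have hvmem : v ∈ convexHull ℝ s := by
      apply subset_convexHull
      exact ⟨σ.symm, rfl⟩
    have hfylt := hfu v hvmem
    -- f y ≤ f v
    have hfy : f y = ∑ k ∈ Finset.range m, ℓ (σ (idx k)) * y (σ (idx k)) := by
      rw [hfx y, ← Equiv.sum_comp σ (fun i => y i * ℓ i),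
        ← Fin.sum_univ_eq_sum_range (fun k => ℓ (σ (idx k)) * y (σ (idx k))) m]
      apply Finset.sum_congr rfl
      intro i _
      rw [hidxfin]; ring
    have hfv : f v = ∑ k ∈ Finset.range m, ℓ (σ (idx k)) * (((idx k : ℕ) : ℝ) + 1) := by
      rw [hfx v, ← Equiv.sum_comp σ (fun i => v i * ℓ i),
        ← Fin.sum_univ_eq_sum_range (fun k => ℓ (σ (idx k)) * (((idx k : ℕ) : ℝ) + 1)) m]
      apply Finset.sum_congr rfl
      intro i _
      rw [hidxfin, hv]
      simp only [Equiv.symm_apply_apply]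
      ring
    rw [← hfy, ← hfv] at hkey
    linarith
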